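/- For every word w ∈ {0,1}^n, the restriction of M_w to the plane {x+y+z = 0} has operator norm at most (3/5)^n; equivalently, ‖M_w·u⃗‖ ≤ (3/5)^n·‖u⃗‖ for all u⃗ with coordinates summing to 0. -/
import Mathlib

noncomputable def M0 : Matrix (Fin 3) (Fin 3) ℝ :=
  (1/5 : ℝ) • !![5, 2, 2; 0, 2, 1; 0, 1, 2]

noncomputable def M1 : Matrix (Fin 3) (Fin 3) ℝ :=
  (1/5 : ℝ) • !![2, 0, 1; 2, 5, 2; 1, 0, 2]

noncomputable def Mbit (b : Bool) : Matrix (Fin 3) (Fin 3) ℝ :=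
  if b then M1 else M0

noncomputable def Mword (w : List Bool) : Matrix (Fin 3) (Fin 3) ℝ :=
  (w.map Mbit).prod

noncomputable def norm2 (v : Fin 3 → ℝ) : ℝ :=
  Real.sqrt (v 0 ^ 2 + v 1 ^ 2 + v 2 ^ 2)

lemma sum_mbit (b : Bool) (u : Fin 3 → ℝ) (hu : u 0 + u 1 + u 2 = 0) :
    ((Mbit b).mulVec u) 0 + ((Mbit b).mulVec u) 1 + ((Mbit b).mulVec u) 2 = 0 := by
  cases b <;>
  · simp [Mbit, M0, M1, Matrix.mulVec, dotProduct, Fin.sum_univ_three]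
    linarith

lemma step (b : Bool) (u : Fin 3 → ℝ) (hu : u 0 + u 1 + u 2 = 0) :
    norm2 ((Mbit b).mulVec u) ≤ (3/5 : ℝ) * norm2 u := by
  have h35 : (3/5 : ℝ) = Real.sqrt (9/25) := by
    rw [show (9/25 : ℝ) = (3/5)^2 by norm_num, Real.sqrt_sq (by norm_num)]
  cases b <;>
  · unfold norm2
    rw [h35, ← Real.sqrt_mul (by norm_num)]
    apply Real.sqrt_le_sqrt
    simp [Mbit, M0, M1, Matrix.mulVec, dotProduct, Fin.sum_univ_three]
    have h2 : u 2 = -(u 0) - u 1 := by linarith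
    rw [h2]
    nlinarith [sq_nonneg (u 0 + 2 * u 1), sq_nonneg (2 * u 0 + u 1)]

lemma sum_mword (w : List Bool) (u : Fin 3 → ℝ) (hu : u 0 + u 1 + u 2 = 0) :
    ((Mword w).mulVec u) 0 + ((Mword w).mulVec u) 1 + ((Mword w).mulVec u) 2 = 0 := by
  induction w with
  | nil => simpa [Mword, Matrix.mulVec_one] using hu
  | cons b t ih =>
      have : Mword (b :: t) = Mbit b * Mword t := by
        simp [Mword]
      rw [this, ← Matrix.mulVec_mulVec]
      exact sum_mbit b _ ih

theorem stmt_12 (w : List Bool) (u : Fin 3 → ℝ) (hu : u 0 + u 1 + u 2 = 0) :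
    norm2 ((Mword w).mulVec u) ≤ (3/5 : ℝ) ^ w.length * norm2 u := by
  induction w with
  | nil => simp [Mword, Matrix.mulVec_one]
  | cons b t ih =>
      have hM : Mword (b :: t) = Mbit b * Mword t := by simp [Mword]
      rw [hM, ← Matrix.mulVec_mulVec]
      calc norm2 ((Mbit b).mulVec ((Mword t).mulVec u))
          ≤ (3/5 : ℝ) * norm2 ((Mword t).mulVec u) := step b _ (sum_mword t u hu)
        _ ≤ (3/5 : ℝ) * ((3/5 : ℝ) ^ t.length * norm2 u) := by
            nlinarith [ih]
        _ = (3/5 : ℝ) ^ (b :: t).length * norm2 u := by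
            simp [pow_succ]; ring
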